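/- arXiv:1510.01518 — 4 statements merged into one kernel-verified Lean document; each statement's English description precedes it below -/
import Mathlib

section
/- Let f = g - h where g, h : ℝ^n → ℝ are differentiable convex functions, and suppose g' is another decomposition f = g' - h' with g', h' convex differentiable, such that c := g - g' is convex. Then for any point x₀, the convexified functions f_g(x) := g(x) - h(x₀) - ∇h(x₀)ᵀ(x - x₀) and f_{g'}(x) := g'(x) - h'(x₀) - ∇h'(x₀)ᵀ(x - x₀) satisfy f_{g'}(x) ≤ f_g(x) for all x. -/
open InnerProductSpace

/-- First-order condition: a differentiable convex function lies above its tangent. -/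
lemma convexOn_tangent_le {E : Type*} [NormedAddCommGroup E] [NormedSpace ℝ E]
    {c : E → ℝ} (hc : ConvexOn ℝ Set.univ c) (hcd : Differentiable ℝ c)
    (x₀ x : E) : c x₀ + (fderiv ℝ c x₀) (x - x₀) ≤ c x := by
  set v := x - x₀ with hv
  set φ : ℝ → ℝ := fun t => c (x₀ + t • v) with hφ
  have hφc : ConvexOn ℝ Set.univ φ := by
    have h2 := hc.comp_affineMap (AffineMap.lineMap x₀ x)
    have hpre : (⇑(AffineMap.lineMap x₀ x : ℝ →ᵃ[ℝ] E)) ⁻¹' Set.univ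
        = (Set.univ : Set ℝ) := by simp
    rw [hpre] at h2
    have hfun : φ = c ∘ ⇑(AffineMap.lineMap x₀ x : ℝ →ᵃ[ℝ] E) := by
      funext t
      simp [φ, AffineMap.lineMap_apply, hv]
      rw [add_comm]
    rw [hfun]
    exact h2
  have hline : HasDerivAt (fun t : ℝ => x₀ + t • v) v 0 := by
    simpa using ((hasDerivAt_id (0:ℝ)).smul_const v).const_add x₀
  have h0v : x₀ + (0:ℝ) • v = x₀ := by simp
  have hfd0 : HasFDerivAt c (fderiv ℝ c x₀) (x₀ + (0:ℝ) • v) := by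
    rw [h0v]; exact (hcd x₀).hasFDerivAt
  have hder : HasDerivAt φ ((fderiv ℝ c x₀) v) 0 := hfd0.comp_hasDerivAt 0 hline
  have hslope := hφc.le_slope_of_hasDerivAt (Set.mem_univ (0:ℝ)) (Set.mem_univ (1:ℝ))
    (by norm_num) hder
  rw [slope_def_field] at hslope
  simp only [φ] at hslope
  have h1 : x₀ + (1:ℝ) • v = x := by simp [hv]
  rw [h0v, h1] at hslope
  have : (fderiv ℝ c x₀) v ≤ c x - c x₀ := by
    field_simp at hslope
    linarith
  linarith

theorem dominated_dcd_convexification_le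
    {n : ℕ} (g h g' h' : EuclideanSpace ℝ (Fin n) → ℝ)
    (hg : ConvexOn ℝ Set.univ g) (hh : ConvexOn ℝ Set.univ h)
    (hg' : ConvexOn ℝ Set.univ g') (hh' : ConvexOn ℝ Set.univ h')
    (hgd : Differentiable ℝ g) (hhd : Differentiable ℝ h)
    (hg'd : Differentiable ℝ g') (hh'd : Differentiable ℝ h')
    (hdec : ∀ x, g x - h x = g' x - h' x)
    (hc : ConvexOn ℝ Set.univ (fun x => g x - g' x))
    (x₀ : EuclideanSpace ℝ (Fin n)) :
    ∀ x, g' x - (h' x₀ + inner ℝ (gradient h' x₀) (x - x₀))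
      ≤ g x - (h x₀ + inner ℝ (gradient h x₀) (x - x₀)) := by
  intro x
  set c : EuclideanSpace ℝ (Fin n) → ℝ := fun y => g y - g' y with hcdef
  have hcd : Differentiable ℝ c := hgd.sub hg'd
  have key := convexOn_tangent_le hc hcd x₀ x
  -- c = h - h'
  have hceq : c = fun y => h y - h' y := by
    funext y; have := hdec y; simp only [hcdef]; linarith
  -- gradients and fderivs
  have hgradh : (fderiv ℝ h x₀) (x - x₀) = inner ℝ (gradient h x₀) (x - x₀) := by
    have := ((hhd x₀).hasGradientAt).hasFDerivAt.fderiv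
    rw [this]; simp [InnerProductSpace.toDual_apply_apply]
  have hgradh' : (fderiv ℝ h' x₀) (x - x₀) = inner ℝ (gradient h' x₀) (x - x₀) := by
    have := ((hh'd x₀).hasGradientAt).hasFDerivAt.fderiv
    rw [this]; simp [InnerProductSpace.toDual_apply_apply]
  have hfd : (fderiv ℝ c x₀) (x - x₀)
      = (fderiv ℝ h x₀) (x - x₀) - (fderiv ℝ h' x₀) (x - x₀) := by
    rw [hceq]
    rw [fderiv_fun_sub (hhd x₀) (hh'd x₀)]
    simp
  have hcx : c x = h x - h' x := by rw [hceq]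
  have hcx₀ : c x₀ = h x₀ - h' x₀ := by rw [hceq]
  rw [hfd, hgradh, hgradh', hcx, hcx₀] at key
  have hgx : g x - g' x = h x - h' x := by have := hdec x; linarith
  linarith
end

section
/- If a polynomial p in variables x = (x₁,…,x_n) of degree 2d admits a representation p(x) = z(x)ᵀ Q z(x) where z(x) is the vector of all monomials of degree up to d and Q is a symmetric diagonally dominant matrix with nonnegative diagonal entries, then p is a sum of squares of polynomials. -/
open Finset

private lemma key_pair {A : Type*} [CommRing A] [Algebra ℝ A] (a : ℝ) (x y : A) :
    (max a 0 / 2) • (x + y) ^ 2 + (max (-a) 0 / 2) • (x - y) ^ 2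
      = (|a| / 2) • (x ^ 2 + y ^ 2) + a • (x * y) := by
  have h1 : |a| = max a 0 + max (-a) 0 := by
    rcases le_total a 0 with h | h
    · simp [abs_of_nonpos h, max_eq_right h, max_eq_left (neg_nonneg.mpr h)]
    · simp [abs_of_nonneg h, max_eq_left h, max_eq_right (neg_nonpos.mpr h)]
  have h2 : a = max a 0 - max (-a) 0 := by
    rcases le_total a 0 with h | h
    · simp [max_eq_right h, max_eq_left (neg_nonneg.mpr h)]
    · simp [max_eq_left h, max_eq_right (neg_nonpos.mpr h)]
  have key : ∀ u v : ℝ,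
      (u / 2) • (x + y) ^ 2 + (v / 2) • (x - y) ^ 2
        = ((u + v) / 2) • (x ^ 2 + y ^ 2) + (u - v) • (x * y) := by
    intro u v
    have e1 : (x + y) ^ 2 = x ^ 2 + y ^ 2 + (x * y + x * y) := by ring
    have e2 : (x - y) ^ 2 = x ^ 2 + y ^ 2 - (x * y + x * y) := by ring
    rw [e1, e2]
    module
  rw [key, ← h1, ← h2]

private lemma dd_decomp {m : ℕ} {A : Type*} [CommRing A] [Algebra ℝ A]
    (Q : Matrix (Fin m) (Fin m) ℝ) (hQsymm : Q.IsSymm) (z : Fin m → A) :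
    ∑ i : Fin m, ∑ j : Fin m, Q i j • (z i * z j)
      = ∑ i : Fin m, (Q i i - ∑ j ∈ Finset.univ.erase i, |Q i j|) • (z i) ^ 2
        + ∑ i : Fin m, ∑ j : Fin m,
            (if i = j then (0 : A) else (max (Q i j) 0 / 2) • (z i + z j) ^ 2)
        + ∑ i : Fin m, ∑ j : Fin m,
            (if i = j then (0 : A) else (max (-(Q i j)) 0 / 2) • (z i - z j) ^ 2) := by
  -- combine the two off-diagonal sums
  have hBC : ∑ i : Fin m, ∑ j : Fin m,
        (if i = j then (0 : A) else (max (Q i j) 0 / 2) • (z i + z j) ^ 2)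
      + ∑ i : Fin m, ∑ j : Fin m,
        (if i = j then (0 : A) else (max (-(Q i j)) 0 / 2) • (z i - z j) ^ 2)
      = ∑ i : Fin m, ∑ j : Fin m,
        (if i = j then (0 : A)
          else (|Q i j| / 2) • ((z i) ^ 2) + (|Q i j| / 2) • ((z j) ^ 2)
            + Q i j • (z i * z j)) := by
    rw [← Finset.sum_add_distrib]
    refine Finset.sum_congr rfl fun i _ => ?_
    rw [← Finset.sum_add_distrib]
    refine Finset.sum_congr rfl fun j _ => ?_
    split_ifs with h
    · simp
    · rw [key_pair, smul_add]
  rw [add_assoc, hBC]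
  -- split and swap the (z j)^2 part
  have hsplit : ∑ i : Fin m, ∑ j : Fin m,
        (if i = j then (0 : A)
          else (|Q i j| / 2) • ((z i) ^ 2) + (|Q i j| / 2) • ((z j) ^ 2)
            + Q i j • (z i * z j))
      = ∑ i : Fin m, ∑ j : Fin m,
          (if i = j then (0 : A) else (|Q i j| / 2) • ((z i) ^ 2))
        + ∑ i : Fin m, ∑ j : Fin m,
          (if i = j then (0 : A) else (|Q i j| / 2) • ((z j) ^ 2))
        + ∑ i : Fin m, ∑ j : Fin m,
          (if i = j then (0 : A) else Q i j • (z i * z j)) := by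
    rw [← Finset.sum_add_distrib, ← Finset.sum_add_distrib]
    refine Finset.sum_congr rfl fun i _ => ?_
    rw [← Finset.sum_add_distrib, ← Finset.sum_add_distrib]
    refine Finset.sum_congr rfl fun j _ => ?_
    split_ifs with h <;> simp
  have hswap : ∑ i : Fin m, ∑ j : Fin m,
        (if i = j then (0 : A) else (|Q i j| / 2) • ((z j) ^ 2))
      = ∑ i : Fin m, ∑ j : Fin m,
        (if i = j then (0 : A) else (|Q i j| / 2) • ((z i) ^ 2)) := by
    rw [Finset.sum_comm]
    refine Finset.sum_congr rfl fun i _ => Finset.sum_congr rfl fun j _ => ?_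
    rw [hQsymm.apply i j]
    exact if_congr eq_comm rfl rfl
  rw [hsplit, hswap]
  -- now everything per row i
  rw [← Finset.sum_add_distrib, ← Finset.sum_add_distrib, ← Finset.sum_add_distrib]
  refine Finset.sum_congr rfl fun i _ => ?_
  -- convert ite sums over univ to sums over erase i
  have herase : ∀ h : Fin m → A,
      (∑ j : Fin m, if i = j then (0 : A) else h j) = ∑ j ∈ Finset.univ.erase i, h j := by
    intro h
    rw [← Finset.sum_erase_add _ _ (Finset.mem_univ i), if_pos rfl, add_zero]
    refine Finset.sum_congr rfl fun j hj => if_neg ?_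
    intro e
    exact Finset.ne_of_mem_erase hj e.symm
  rw [herase, herase]
  have h1 : (∑ j ∈ Finset.univ.erase i, (|Q i j| / 2) • (z i) ^ 2)
      + (∑ j ∈ Finset.univ.erase i, (|Q i j| / 2) • (z i) ^ 2)
      = (∑ j ∈ Finset.univ.erase i, |Q i j|) • (z i) ^ 2 := by
    rw [← Finset.sum_add_distrib, Finset.sum_smul]
    refine Finset.sum_congr rfl fun j _ => ?_
    rw [← add_smul]
    ring_nf
  have h2 : ∑ j : Fin m, Q i j • (z i * z j)
      = Q i i • (z i) ^ 2 + ∑ j ∈ Finset.univ.erase i, Q i j • (z i * z j) := by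
    rw [← Finset.sum_erase_add _ _ (Finset.mem_univ i), sq]
    ring
  rw [h2, h1, sub_smul]
  abel

open MvPolynomial Finset in
theorem dd_gram_implies_sos
    {n d m : ℕ} (p : MvPolynomial (Fin n) ℝ)
    (z : Fin m → MvPolynomial (Fin n) ℝ)
    (hz : ∀ i, ∃ s : Fin n →₀ ℕ, (s.sum fun _ e => e) ≤ d ∧
      z i = monomial s (1 : ℝ))
    (Q : Matrix (Fin m) (Fin m) ℝ) (hQsymm : Q.IsSymm)
    (hQdiag : ∀ i, 0 ≤ Q i i)
    (hQdd : ∀ i, ∑ j ∈ Finset.univ.erase i, |Q i j| ≤ Q i i)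
    (hrep : p = ∑ i : Fin m, ∑ j : Fin m, Q i j • (z i * z j)) :
    ∃ (r : ℕ) (q : Fin r → MvPolynomial (Fin n) ℝ),
      p = ∑ k : Fin r, (q k) ^ 2 := by
  classical
  let q0 : (Fin m ⊕ (Fin m × Fin m ⊕ Fin m × Fin m)) → MvPolynomial (Fin n) ℝ :=
    Sum.elim
      (fun i => Real.sqrt (Q i i - ∑ j ∈ Finset.univ.erase i, |Q i j|) • z i)
      (Sum.elim
        (fun ij => if ij.1 = ij.2 then 0
          else Real.sqrt (max (Q ij.1 ij.2) 0 / 2) • (z ij.1 + z ij.2))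
        (fun ij => if ij.1 = ij.2 then 0
          else Real.sqrt (max (-(Q ij.1 ij.2)) 0 / 2) • (z ij.1 - z ij.2)))
  have hp : p = ∑ k, (q0 k) ^ 2 := by
    rw [hrep, dd_decomp Q hQsymm z]
    rw [Fintype.sum_sum_type, Fintype.sum_sum_type, Fintype.sum_prod_type,
      Fintype.sum_prod_type]
    simp only [q0, Sum.elim_inl, Sum.elim_inr]
    rw [add_assoc]
    congr 1
    · refine Finset.sum_congr rfl fun i _ => ?_
      rw [smul_pow, Real.sq_sqrt (sub_nonneg.mpr (hQdd i))]
    congr 1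
    · refine Finset.sum_congr rfl fun i _ => Finset.sum_congr rfl fun j _ => ?_
      split_ifs with h
      · simp
      · rw [smul_pow, Real.sq_sqrt (div_nonneg (le_max_right _ _) (by norm_num))]
    · refine Finset.sum_congr rfl fun i _ => Finset.sum_congr rfl fun j _ => ?_
      split_ifs with h
      · simp
      · rw [smul_pow, Real.sq_sqrt (div_nonneg (le_max_right _ _) (by norm_num))]
  refine ⟨Fintype.card (Fin m ⊕ (Fin m × Fin m ⊕ Fin m × Fin m)),
    fun k => q0 ((Fintype.equivFin _).symm k), ?_⟩
  rw [hp, ← Equiv.sum_comp (Fintype.equivFin _).symm (fun i => (q0 i) ^ 2)]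
end

section
/- For every n and d, the polynomial p(x) = (x₁² + ⋯ + x_n²)^d is sos-convex: the polynomial (x,y) ↦ yᵀ H_p(x) y is a sum of squares of polynomials in (x,y). -/
open MvPolynomial

def SosPoly {σ : Type*} (p : MvPolynomial σ ℝ) : Prop :=
  ∃ (r : ℕ) (q : Fin r → MvPolynomial σ ℝ), p = ∑ k, q k ^ 2

namespace SosPoly

variable {σ : Type*}

lemma zero : SosPoly (0 : MvPolynomial σ ℝ) := ⟨0, ![], by simp⟩

lemma sq (q : MvPolynomial σ ℝ) : SosPoly (q ^ 2) := ⟨1, ![q], by simp⟩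

lemma add {p₁ p₂ : MvPolynomial σ ℝ} (h₁ : SosPoly p₁) (h₂ : SosPoly p₂) :
    SosPoly (p₁ + p₂) := by
  obtain ⟨r₁, q₁, rfl⟩ := h₁
  obtain ⟨r₂, q₂, rfl⟩ := h₂
  refine ⟨r₁ + r₂, Fin.append q₁ q₂, ?_⟩
  rw [Fin.sum_univ_add]
  simp [Fin.append]

lemma sum {ι : Type*} (s : Finset ι) (f : ι → MvPolynomial σ ℝ)
    (h : ∀ i ∈ s, SosPoly (f i)) : SosPoly (∑ i ∈ s, f i) := by
  classical
  induction s using Finset.induction with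
  | empty => simpa using zero
  | @insert a s ha ih =>
    rw [Finset.sum_insert ha]
    exact add (h a (s.mem_insert_self a)) (ih fun i hi => h i (Finset.mem_insert_of_mem hi))

lemma sq_mul {p : MvPolynomial σ ℝ} (h : SosPoly p) (a : MvPolynomial σ ℝ) :
    SosPoly (a ^ 2 * p) := by
  obtain ⟨r, q, rfl⟩ := h
  refine ⟨r, fun k => a * q k, ?_⟩
  rw [Finset.mul_sum]
  simp [mul_pow]

lemma mul {p₁ p₂ : MvPolynomial σ ℝ} (h₁ : SosPoly p₁) (h₂ : SosPoly p₂) :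
    SosPoly (p₁ * p₂) := by
  obtain ⟨r₁, q₁, rfl⟩ := h₁
  rw [Finset.sum_mul]
  exact sum _ _ fun i _ => sq_mul h₂ _

lemma pow {p : MvPolynomial σ ℝ} (h : SosPoly p) (m : ℕ) : SosPoly (p ^ m) := by
  induction m with
  | zero => exact ⟨1, ![1], by simp⟩
  | succ m ih => rw [pow_succ]; exact mul ih h

lemma C_mul {p : MvPolynomial σ ℝ} (h : SosPoly p) {c : ℝ} (hc : 0 ≤ c) :
    SosPoly (C c * p) := by
  have : (C c : MvPolynomial σ ℝ) = (C (Real.sqrt c)) ^ 2 := by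
    rw [← map_pow, Real.sq_sqrt hc]
  rw [this]; exact sq_mul h _

end SosPoly

lemma pderiv_sumsq (n : ℕ) (m : Fin n) :
    pderiv m (∑ k : Fin n, (X k : MvPolynomial (Fin n) ℝ) ^ 2) = 2 * X m := by
  rw [map_sum]
  have : ∀ k : Fin n, pderiv m ((X k : MvPolynomial (Fin n) ℝ) ^ 2)
      = if m = k then 2 * X k else 0 := by
    intro k
    rw [pderiv_pow, pderiv_X]
    simp [Pi.single_apply, eq_comm]
  simp_rw [this]
  simp

lemma hess (n d : ℕ) (i j : Fin n) :
    pderiv i (pderiv j ((∑ k : Fin n, (X k : MvPolynomial (Fin n) ℝ) ^ 2) ^ d)) =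
      C ((d * (d - 1) : ℕ) : ℝ) *
          ((∑ k : Fin n, X k ^ 2) ^ (d - 2) * ((2 * X i) * (2 * X j)))
        + if i = j then C ((2 * d : ℕ) : ℝ) * (∑ k : Fin n, X k ^ 2) ^ (d - 1) else 0 := by
  set S : MvPolynomial (Fin n) ℝ := ∑ k : Fin n, X k ^ 2 with hS
  have hcast : ∀ m : ℕ, (m : MvPolynomial (Fin n) ℝ) = C (m : ℝ) := by
    intro m; simp
  rw [pderiv_pow, pderiv_sumsq, hcast]
  rw [pderiv_mul, pderiv_mul, pderiv_C, pderiv_pow, pderiv_sumsq, hcast, pderiv_mul, pderiv_X]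
  have h2 : d - 1 - 1 = d - 2 := by omega
  have hc : ((d * (d - 1) : ℕ) : ℝ) = (d : ℝ) * ((d - 1 : ℕ) : ℝ) := by push_cast; ring
  rw [h2, hc]
  simp only [map_mul]
  have hp2 : pderiv i (2 : MvPolynomial (Fin n) ℝ) = 0 := by
    rw [show (2 : MvPolynomial (Fin n) ℝ) = C (2 : ℝ) from (map_ofNat C 2).symm, pderiv_C]
  rw [hp2]
  split
  · next h =>
    subst h
    rw [Pi.single_eq_same, Nat.cast_mul, Nat.cast_ofNat]
    have h2d : (C ((2:ℝ) * (d:ℝ)) : MvPolynomial (Fin n) ℝ) = 2 * C (d:ℝ) := by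
      rw [map_mul]; congr 1
    rw [h2d]
    ring
  · next h =>
    rw [Pi.single_eq_of_ne (fun hji => h hji.symm)]
    ring

open MvPolynomial in
theorem sum_sq_pow_is_sos_convex (n d : ℕ) :
    ∃ (r : ℕ) (q : Fin r → MvPolynomial (Fin n ⊕ Fin n) ℝ),
      ∀ (x y : Fin n → ℝ),
        ∑ i : Fin n, ∑ j : Fin n,
            y i * (eval x (pderiv i (pderiv j ((∑ k : Fin n, X k ^ 2) ^ d)))) * y j
          = ∑ k : Fin r, (eval (Sum.elim x y) (q k)) ^ 2 := by
  classical
  set S2 : MvPolynomial (Fin n ⊕ Fin n) ℝ := ∑ k : Fin n, X (Sum.inl k) ^ 2 with hS2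
  set T : MvPolynomial (Fin n ⊕ Fin n) ℝ := ∑ k : Fin n, X (Sum.inl k) * X (Sum.inr k) with hT
  set U : MvPolynomial (Fin n ⊕ Fin n) ℝ := ∑ k : Fin n, X (Sum.inr k) ^ 2 with hU
  set P : MvPolynomial (Fin n ⊕ Fin n) ℝ :=
    C ((4 * (d * (d - 1)) : ℕ) : ℝ) * (S2 ^ (d - 2) * T ^ 2)
      + C ((2 * d : ℕ) : ℝ) * (S2 ^ (d - 1) * U) with hPdef
  have hS2sos : SosPoly S2 := SosPoly.sum _ _ (fun k _ => SosPoly.sq _)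
  have hUsos : SosPoly U := SosPoly.sum _ _ (fun k _ => SosPoly.sq _)
  have hP : SosPoly P := by
    apply SosPoly.add
    · exact SosPoly.C_mul (SosPoly.mul (SosPoly.pow hS2sos _) (SosPoly.sq _))
        (by positivity)
    · exact SosPoly.C_mul (SosPoly.mul (SosPoly.pow hS2sos _) hUsos)
        (by positivity)
  obtain ⟨r, q, hq⟩ := hP
  refine ⟨r, q, fun x y => ?_⟩
  have hRHS : ∑ k : Fin r, (eval (Sum.elim x y) (q k)) ^ 2 = eval (Sum.elim x y) P := by
    rw [hq, map_sum]
    simp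
  rw [hRHS]
  set s : ℝ := ∑ k : Fin n, x k ^ 2 with hs
  set t : ℝ := ∑ k : Fin n, x k * y k with ht
  set u : ℝ := ∑ k : Fin n, y k ^ 2 with hu
  have hPeval : eval (Sum.elim x y) P =
      ((4 * (d * (d - 1)) : ℕ) : ℝ) * (s ^ (d - 2) * t ^ 2)
        + ((2 * d : ℕ) : ℝ) * (s ^ (d - 1) * u) := by
    simp [hPdef, hS2, hT, hU, hs, ht, hu]
  rw [hPeval]
  -- evaluate the LHS using the hessian formula
  have hL : ∀ i j : Fin n,
      y i * (eval x (pderiv i (pderiv j ((∑ k : Fin n, X k ^ 2) ^ d)))) * y j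
        = (4 * ((d * (d - 1) : ℕ) : ℝ) * s ^ (d - 2)) * ((x i * y i) * (x j * y j))
          + (if i = j then ((2 * d : ℕ) : ℝ) * s ^ (d - 1) * (y i * y j) else 0) := by
    intro i j
    rw [hess n d i j]
    simp only [map_add, map_mul, map_pow, map_sum, eval_C, eval_X, apply_ite (eval x),
      map_zero, map_ofNat]
    rw [← hs]
    split <;> ring
  simp_rw [hL, Finset.sum_add_distrib]
  congr 1
  · simp_rw [← Finset.mul_sum]
    rw [← Finset.sum_mul, ← ht]
    push_cast
    ring
  · simp only [Finset.sum_ite_eq, Finset.mem_univ, if_true]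
    have : ∀ i : Fin n, ((2 * d : ℕ) : ℝ) * s ^ (d - 1) * (y i * y i)
        = (((2 * d : ℕ) : ℝ) * s ^ (d - 1)) * y i ^ 2 := by intro i; ring
    simp_rw [this, ← Finset.mul_sum, ← hu]
    ring
end

section
/- Let f be a polynomial on ℝ^n of degree at most 2d. Then there exist polynomials g, h of degree at most 2d, both sos-convex (i.e., yᵀH_g(x)y and yᵀH_h(x)y are sums of squares of polynomials in (x,y)), such that f = g - h. -/
open MvPolynomial in
/-- A polynomial `g` in `n` variables is sos-convex if `yᵀ H_g(x) y` is a sum of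
squares of polynomials in the `2n` variables `(x, y)`. -/
def SosConvex {n : ℕ} (g : MvPolynomial (Fin n) ℝ) : Prop :=
  ∃ (r : ℕ) (q : Fin r → MvPolynomial (Fin n ⊕ Fin n) ℝ),
    ∀ (x y : Fin n → ℝ),
      ∑ i : Fin n, ∑ j : Fin n,
          y i * (eval x (pderiv i (pderiv j g))) * y j
        = ∑ k : Fin r, (eval (Sum.elim x y) (q k)) ^ 2

namespace SosDcd
open MvPolynomial Finset

variable {n d : ℕ}

/-- an affine form -/
noncomputable def L (n : ℕ) (b : ℝ) (a : Fin n → ℝ) : MvPolynomial (Fin n) ℝ :=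
  C b + ∑ i, C (a i) * X i

lemma pderiv_L (j : Fin n) (b : ℝ) (a : Fin n → ℝ) : pderiv j (L n b a) = C (a j) := by
  simp [L, pderiv_X, Pi.single_apply, apply_ite C, mul_ite]

lemma eval_L (x : Fin n → ℝ) (b : ℝ) (a : Fin n → ℝ) :
    eval x (L n b a) = b + ∑ i, a i * x i := by simp [L]

lemma totalDegree_L_le (b : ℝ) (a : Fin n → ℝ) : (L n b a).totalDegree ≤ 1 := by
  refine (totalDegree_add _ _).trans (max_le (by simp) ?_)
  refine (totalDegree_finset_sum _ _).trans ?_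
  refine Finset.sup_le fun i _ => ?_
  refine (totalDegree_mul _ _).trans ?_
  simp [totalDegree_X]

lemma sum_sum_eq (c : ℝ) (a y : Fin n → ℝ) :
    ∑ i, ∑ j, y i * (c * a i * a j) * y j = c * (∑ i, a i * y i) ^ 2 := by
  have h : ∀ i, ∑ j, y i * (c * a i * a j) * y j = c * (a i * y i) * ∑ j, a j * y j := by
    intro i
    rw [Finset.mul_sum]
    exact Finset.sum_congr rfl fun j _ => by ring
  simp_rw [h]
  rw [← Finset.sum_mul, ← Finset.mul_sum, sq]
  ring

lemma sosConvex_L_pow_even (b : ℝ) (a : Fin n → ℝ) (t : ℕ) :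
    SosConvex (L n b a ^ (2 * t)) := by
  rcases Nat.eq_zero_or_pos t with rfl | ht
  · refine ⟨0, Fin.elim0, fun x y => ?_⟩
    simp
  · set m := 2 * t with hm
    have hkey : ∀ i j : Fin n, pderiv i (pderiv j (L n b a ^ m)) =
        C ((m : ℝ) * ((m - 1 : ℕ) : ℝ) * a i * a j) * L n b a ^ (m - 2) := by
      intro i j
      rw [pderiv_pow, pderiv_L, ← C_eq_coe_nat, pderiv_mul, pderiv_C, mul_zero, add_zero,
        pderiv_C_mul, pderiv_pow, pderiv_L, ← C_eq_coe_nat,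
        show m - 1 - 1 = m - 2 from rfl]
      rw [C_mul, C_mul, C_mul]
      ring
    refine ⟨1, fun _ => C (Real.sqrt ((m : ℝ) * ((m - 1 : ℕ) : ℝ))) *
        (rename Sum.inl (L n b a)) ^ (t - 1) * (∑ i, C (a i) * X (Sum.inr i)), fun x y => ?_⟩
    have h1 : ∀ i j : Fin n, eval x (pderiv i (pderiv j (L n b a ^ m))) =
        ((m : ℝ) * ((m - 1 : ℕ) : ℝ) * (eval x (L n b a)) ^ (m - 2)) * a i * a j := by
      intro i j; rw [hkey]; simp; ring
    simp_rw [h1]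
    rw [sum_sum_eq]
    rw [Fin.sum_univ_one]
    have hnn : (0:ℝ) ≤ (m : ℝ) * ((m - 1 : ℕ) : ℝ) := by positivity
    have : eval (Sum.elim x y) (rename Sum.inl (L n b a)) = eval x (L n b a) := by
      rw [eval_rename]; rfl
    simp only [eval_mul, eval_pow, this, eval_C, eval_sum, eval_X]
    rw [mul_pow, mul_pow, Real.sq_sqrt hnn, ← pow_mul]
    have hexp : (t - 1) * 2 = m - 2 := by omega
    rw [hexp]
    simp only [Sum.elim_inr]

/-- Differences of sos-convex polynomials of degree at most `2d`. -/
def D (n d : ℕ) : Set (MvPolynomial (Fin n) ℝ) :=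
  {p | ∃ g h : MvPolynomial (Fin n) ℝ,
    g.totalDegree ≤ 2 * d ∧ h.totalDegree ≤ 2 * d ∧
    SosConvex g ∧ SosConvex h ∧ p = g - h}

lemma sosConvex_zero : SosConvex (0 : MvPolynomial (Fin n) ℝ) :=
  ⟨0, Fin.elim0, fun x y => by simp⟩

lemma sosConvex_add {g h : MvPolynomial (Fin n) ℝ} (hg : SosConvex g) (hh : SosConvex h) :
    SosConvex (g + h) := by
  obtain ⟨r1, q1, H1⟩ := hg
  obtain ⟨r2, q2, H2⟩ := hh
  refine ⟨r1 + r2, Fin.append q1 q2, fun x y => ?_⟩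
  have : ∀ i j : Fin n, y i * eval x (pderiv i (pderiv j (g + h))) * y j
      = y i * eval x (pderiv i (pderiv j g)) * y j
        + y i * eval x (pderiv i (pderiv j h)) * y j := by
    intro i j; simp [map_add]; ring
  simp_rw [this, Finset.sum_add_distrib]
  rw [H1 x y, H2 x y, Fin.sum_univ_add]
  simp [Fin.append_left, Fin.append_right]

lemma sosConvex_smul {g : MvPolynomial (Fin n) ℝ} (c : ℝ) (hc : 0 ≤ c) (hg : SosConvex g) :
    SosConvex (c • g) := by
  obtain ⟨r, q, H⟩ := hg
  refine ⟨r, fun k => C (Real.sqrt c) * q k, fun x y => ?_⟩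
  have : ∀ i j : Fin n, y i * eval x (pderiv i (pderiv j (c • g))) * y j
      = c * (y i * eval x (pderiv i (pderiv j g)) * y j) := by
    intro i j; simp [map_smul]; ring
  simp_rw [this, ← Finset.mul_sum]
  rw [H x y, Finset.mul_sum]
  refine Finset.sum_congr rfl fun k _ => ?_
  rw [eval_mul, eval_C, mul_pow, Real.sq_sqrt hc]

lemma zero_mem_D : (0 : MvPolynomial (Fin n) ℝ) ∈ D n d :=
  ⟨0, 0, by simp, by simp, sosConvex_zero, sosConvex_zero, by simp⟩

lemma add_mem_D {p q : MvPolynomial (Fin n) ℝ} (hp : p ∈ D n d) (hq : q ∈ D n d) :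
    p + q ∈ D n d := by
  obtain ⟨g1, h1, dg1, dh1, sg1, sh1, rfl⟩ := hp
  obtain ⟨g2, h2, dg2, dh2, sg2, sh2, rfl⟩ := hq
  exact ⟨g1 + g2, h1 + h2,
    (totalDegree_add _ _).trans (max_le dg1 dg2),
    (totalDegree_add _ _).trans (max_le dh1 dh2),
    sosConvex_add sg1 sg2, sosConvex_add sh1 sh2, by ring⟩

lemma smul_mem_D {p : MvPolynomial (Fin n) ℝ} (c : ℝ) (hp : p ∈ D n d) :
    c • p ∈ D n d := by
  obtain ⟨g, h, dg, dh, sg, sh, rfl⟩ := hp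
  rcases le_or_gt 0 c with hc | hc
  · exact ⟨c • g, c • h,
      (totalDegree_smul_le _ _).trans dg, (totalDegree_smul_le _ _).trans dh,
      sosConvex_smul c hc sg, sosConvex_smul c hc sh, by rw [smul_sub]⟩
  · refine ⟨(-c) • h, (-c) • g,
      (totalDegree_smul_le _ _).trans dh, (totalDegree_smul_le _ _).trans dg,
      sosConvex_smul _ (by linarith) sh, sosConvex_smul _ (by linarith) sg, ?_⟩
    rw [smul_sub]
    module

lemma sum_mem_D {ι : Type*} (s : Finset ι) (F : ι → MvPolynomial (Fin n) ℝ)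
    (hF : ∀ i ∈ s, F i ∈ D n d) : (∑ i ∈ s, F i) ∈ D n d := by
  classical
  induction s using Finset.induction_on with
  | empty => simpa using (zero_mem_D : (0:MvPolynomial (Fin n) ℝ) ∈ D n d)
  | insert _ _ hni ih =>
    rw [Finset.sum_insert hni]
    exact add_mem_D (hF _ (Finset.mem_insert_self _ _))
      (ih fun i hi => hF i (Finset.mem_insert_of_mem hi))

lemma key_id {R : Type*} [CommRing R] (u : R) (k : ℕ) :
    ((2 * (k + 1) : ℕ) : R) * u ^ k
      = (u + 1) ^ (k + 1) - (u - 1) ^ (k + 1)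
        - ∑ j ∈ Finset.range k,
            (((k + 1).choose j : R) * (1 - (-1) ^ (k + 1 - j))) * u ^ j := by
  have h1 := add_pow u 1 (k + 1)
  have h2 := add_pow u (-1) (k + 1)
  rw [show u - 1 = u + (-1) by ring, h1, h2, ← Finset.sum_sub_distrib]
  have : ∀ j ∈ Finset.range (k + 1 + 1),
      u ^ j * 1 ^ (k + 1 - j) * ((k+1).choose j : R)
        - u ^ j * (-1) ^ (k + 1 - j) * ((k+1).choose j : R)
      = (((k + 1).choose j : R) * (1 - (-1) ^ (k + 1 - j))) * u ^ j := by
    intro j _; rw [one_pow]; ring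
  rw [Finset.sum_congr rfl this, Finset.sum_range_succ, Finset.sum_range_succ]
  rw [Nat.sub_self, Nat.choose_succ_self_right]
  have hk1 : k + 1 - k = 1 := by omega
  rw [hk1]
  push_cast
  ring

lemma L_pow_mem (a : Fin n → ℝ) : ∀ k, k ≤ 2 * d → ∀ b, L n b a ^ k ∈ D n d := by
  intro k
  induction k using Nat.strong_induction_on with
  | _ k IH =>
    intro hk b
    have hdegk : (L n b a ^ k).totalDegree ≤ 2 * d := by
      refine (totalDegree_pow _ _).trans ?_
      calc k * (L n b a).totalDegree ≤ k * 1 := Nat.mul_le_mul_left _ (totalDegree_L_le _ _)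
        _ ≤ 2 * d := by omega
    rcases Nat.even_or_odd k with ⟨t, ht⟩ | hodd
    · refine ⟨L n b a ^ k, 0, hdegk, by simp, ?_, sosConvex_zero, (sub_zero _).symm⟩
      rw [show k = 2 * t by omega]
      exact sosConvex_L_pow_even b a t
    · -- odd case
      obtain ⟨t, ht⟩ := hodd
      have hklt : k < 2 * d := by omega
      have hplus : L n b a + 1 = L n (b + 1) a := by
        simp [L, C_add]; ring
      have hminus : L n b a - 1 = L n (b - 1) a := by
        simp [L, C_sub]; ring
      have hid := key_id (L n b a) k
      have hmem : (((2 * (k + 1) : ℕ) : ℝ)) • (L n b a ^ k) ∈ D n d := by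
        rw [smul_eq_C_mul, C_eq_coe_nat, hid, hplus, hminus]
        have hdeg1 : (L n (b+1) a ^ (k+1)).totalDegree ≤ 2 * d := by
          refine (totalDegree_pow _ _).trans ?_
          calc (k+1) * (L n (b+1) a).totalDegree ≤ (k+1) * 1 :=
            Nat.mul_le_mul_left _ (totalDegree_L_le _ _)
            _ ≤ 2 * d := by omega
        have hdeg2 : (L n (b-1) a ^ (k+1)).totalDegree ≤ 2 * d := by
          refine (totalDegree_pow _ _).trans ?_
          calc (k+1) * (L n (b-1) a).totalDegree ≤ (k+1) * 1 :=
            Nat.mul_le_mul_left _ (totalDegree_L_le _ _)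
            _ ≤ 2 * d := by omega
        have m1 : L n (b+1) a ^ (k+1) ∈ D n d :=
          ⟨_, 0, hdeg1, by simp, by
            rw [show k + 1 = 2 * (t+1) by omega]; exact sosConvex_L_pow_even _ a (t+1),
            sosConvex_zero, (sub_zero _).symm⟩
        have m2 : L n (b-1) a ^ (k+1) ∈ D n d :=
          ⟨_, 0, hdeg2, by simp, by
            rw [show k + 1 = 2 * (t+1) by omega]; exact sosConvex_L_pow_even _ a (t+1),
            sosConvex_zero, (sub_zero _).symm⟩
        have m3 : (∑ j ∈ Finset.range k,
            ((((k + 1).choose j : MvPolynomial (Fin n) ℝ)) * (1 - (-1) ^ (k + 1 - j)))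
              * L n b a ^ j) ∈ D n d := by
          refine sum_mem_D _ _ fun j hj => ?_
          have hjk := Finset.mem_range.mp hj
          have : ((((k + 1).choose j : MvPolynomial (Fin n) ℝ)) * (1 - (-1) ^ (k + 1 - j)))
              * L n b a ^ j
              = ((((k + 1).choose j : ℝ)) * (1 - (-1) ^ (k + 1 - j))) • L n b a ^ j := by
            rw [smul_eq_C_mul, C_mul, C_sub, C_pow, C_eq_coe_nat]
            norm_num
          rw [this]
          exact smul_mem_D _ (IH j hjk (by omega) b)
        have h4 := add_mem_D (add_mem_D m1 (smul_mem_D (-1) m2)) (smul_mem_D (-1) m3)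
        convert h4 using 1
        module
      have : L n b a ^ k
          = (((2 * (k + 1) : ℕ) : ℝ))⁻¹ • ((((2 * (k + 1) : ℕ) : ℝ)) • (L n b a ^ k)) := by
        rw [smul_smul, inv_mul_cancel₀ (by positivity), one_smul]
      rw [this]
      exact smul_mem_D _ hmem

lemma sum_superset_sign {α : Type*} [Fintype α] [DecidableEq α] (R : Finset α) :
    ∑ S ∈ Finset.univ.powerset.filter (fun S => R ⊆ S), (-1 : ℝ) ^ S.card
      = if R = Finset.univ then (-1 : ℝ) ^ R.card else 0 := by
  have hbij : ∑ S ∈ Finset.univ.powerset.filter (fun S => R ⊆ S), (-1 : ℝ) ^ S.card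
      = ∑ T ∈ Rᶜ.powerset, (-1 : ℝ) ^ (R.card + T.card) := by
    refine Finset.sum_bij' (fun S _ => S \ R) (fun T _ => R ∪ T) ?_ ?_ ?_ ?_ ?_
    · intro S hS
      rw [Finset.mem_filter] at hS
      rw [Finset.mem_powerset]
      intro x hx
      rw [Finset.mem_sdiff] at hx
      simp [hx.2]
    · intro T hT
      simp only [Finset.mem_filter, Finset.mem_powerset]
      exact ⟨Finset.subset_univ _, Finset.subset_union_left⟩
    · intro S hS
      rw [Finset.mem_filter] at hS
      exact Finset.union_sdiff_of_subset hS.2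
    · intro T hT
      rw [Finset.mem_powerset] at hT
      refine Finset.union_sdiff_cancel_left ?_
      exact Finset.disjoint_left.mpr fun x hxR hxT => by
        have := hT hxT; simp at this; exact this hxR
    · intro S hS
      rw [Finset.mem_filter] at hS
      congr 1
      rw [add_comm, Finset.card_sdiff_add_card_eq_card hS.2]
  rw [hbij]
  simp_rw [pow_add]
  rw [← Finset.mul_sum]
  have hint : ∑ T ∈ Rᶜ.powerset, (-1 : ℝ) ^ T.card
      = if Rᶜ = ∅ then 1 else 0 := by
    have := Finset.sum_powerset_neg_one_pow_card (x := Rᶜ)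
    exact_mod_cast congrArg (Int.cast : ℤ → ℝ) this
  rw [hint]
  by_cases h : R = Finset.univ
  · simp [h]
  · have h2 : Rᶜ ≠ ∅ := by rwa [ne_eq, Finset.compl_eq_empty_iff]
    simp [h, h2]

lemma polarization (k : ℕ) (z : Fin k → MvPolynomial (Fin n) ℝ) :
    ∃ N : ℕ, 0 < N ∧
      ((-1 : ℝ) ^ k * N) • ∏ t, z t
        = ∑ S ∈ (Finset.univ : Finset (Fin k)).powerset,
            ((-1 : ℝ) ^ S.card) • (∑ t ∈ S, z t) ^ k := by
  classical
  have expand : ∀ S ∈ (Finset.univ : Finset (Fin k)).powerset,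
      ((-1 : ℝ) ^ S.card) • (∑ t ∈ S, z t) ^ k
        = ∑ p : Fin k → Fin k,
            if Finset.image p Finset.univ ⊆ S
            then ((-1 : ℝ) ^ S.card) • ∏ i, z (p i) else 0 := by
    intro S _
    have h1 : (∑ t ∈ S, z t) = ∑ t : Fin k, if t ∈ S then z t else 0 := by
      rw [Finset.sum_ite_mem, Finset.univ_inter]
    rw [h1, Fintype.sum_pow, Finset.smul_sum]
    refine Finset.sum_congr rfl fun p _ => ?_
    by_cases h : Finset.image p Finset.univ ⊆ S
    · rw [if_pos h]
      congr 1
      refine Finset.prod_congr rfl fun i _ => if_pos ?_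
      exact h (Finset.mem_image_of_mem p (Finset.mem_univ i))
    · rw [if_neg h]
      rw [Finset.image_subset_iff] at h
      push_neg at h
      obtain ⟨i, _, hi⟩ := h
      have hz : (∏ i : Fin k, if p i ∈ S then z (p i) else 0) = 0 :=
        Finset.prod_eq_zero (Finset.mem_univ i) (if_neg hi)
      rw [hz, smul_zero]
  rw [Finset.sum_congr rfl expand, Finset.sum_comm]
  have inner : ∀ p : Fin k → Fin k,
      (∑ S ∈ (Finset.univ : Finset (Fin k)).powerset,
        if Finset.image p Finset.univ ⊆ S
        then ((-1 : ℝ) ^ S.card) • ∏ i, z (p i) else 0)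
      = if Finset.image p Finset.univ = Finset.univ
        then ((-1 : ℝ) ^ k) • ∏ i, z (p i) else 0 := by
    intro p
    rw [← Finset.sum_filter]
    have : ∀ S ∈ Finset.univ.powerset.filter
        (fun S => Finset.image p Finset.univ ⊆ S),
        ((-1 : ℝ) ^ S.card) • ∏ i, z (p i)
          = ((-1 : ℝ) ^ S.card) • ∏ i, z (p i) := fun _ _ => rfl
    rw [← Finset.sum_smul, sum_superset_sign]
    by_cases h : Finset.image p Finset.univ = Finset.univ
    · rw [if_pos h, if_pos h, h, Finset.card_univ, Fintype.card_fin]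
    · rw [if_neg h, if_neg h, zero_smul]
  rw [Finset.sum_congr rfl fun p _ => inner p]
  rw [← Finset.sum_filter]
  set Pset := Finset.univ.filter
      (fun p : Fin k → Fin k => Finset.image p Finset.univ = Finset.univ) with hP
  have hconst : ∀ p ∈ Pset, ((-1 : ℝ) ^ k) • ∏ i, z (p i)
      = ((-1 : ℝ) ^ k) • ∏ t, z t := by
    intro p hp
    rw [hP, Finset.mem_filter] at hp
    have hsurj : Function.Surjective p := fun b => by
      have : b ∈ Finset.image p Finset.univ := by rw [hp.2]; exact Finset.mem_univ b
      obtain ⟨a, _, ha⟩ := Finset.mem_image.mp this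
      exact ⟨a, ha⟩
    have hbij : Function.Bijective p :=
      (Fintype.bijective_iff_surjective_and_card p).mpr ⟨hsurj, rfl⟩
    congr 1
    exact Equiv.prod_comp (Equiv.ofBijective p hbij) z
  rw [Finset.sum_congr rfl hconst, Finset.sum_const]
  refine ⟨Pset.card, ?_, ?_⟩
  · refine Finset.card_pos.mpr ⟨id, ?_⟩
    rw [hP, Finset.mem_filter]
    exact ⟨Finset.mem_univ _, by simp⟩
  · rw [mul_smul, ← Nat.cast_smul_eq_nsmul ℝ]
    rw [smul_comm]

lemma prod_X_mem (k : ℕ) (hk : k ≤ 2 * d) (v : Fin k → Fin n) :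
    (∏ t, (X (v t) : MvPolynomial (Fin n) ℝ)) ∈ D n d := by
  classical
  obtain ⟨N, hN, hpol⟩ := polarization k (fun t => (X (v t) : MvPolynomial (Fin n) ℝ))
  have hc : ((-1 : ℝ) ^ k * N) ≠ 0 := by
    apply mul_ne_zero
    · exact pow_ne_zero _ (by norm_num)
    · exact_mod_cast hN.ne'
  have : (∏ t, (X (v t) : MvPolynomial (Fin n) ℝ))
      = ((-1 : ℝ) ^ k * N)⁻¹ • (((-1 : ℝ) ^ k * N) • ∏ t, (X (v t) : MvPolynomial (Fin n) ℝ)) := by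
    rw [smul_smul, inv_mul_cancel₀ hc, one_smul]
  rw [this, hpol]
  refine smul_mem_D _ (sum_mem_D _ _ fun S _ => smul_mem_D _ ?_)
  have hform : (∑ t ∈ S, (X (v t) : MvPolynomial (Fin n) ℝ))
      = L n 0 (fun i => ((S.filter (fun t => v t = i)).card : ℝ)) := by
    rw [L, map_zero, zero_add]
    rw [← Finset.sum_fiberwise_of_maps_to (fun t _ => Finset.mem_univ (v t))
      (fun t => (X (v t) : MvPolynomial (Fin n) ℝ))]
    refine Finset.sum_congr rfl fun i _ => ?_
    have : ∀ t ∈ S.filter (fun t => v t = i),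
        (X (v t) : MvPolynomial (Fin n) ℝ) = X i := by
      intro t ht
      rw [Finset.mem_filter] at ht
      rw [ht.2]
    rw [Finset.sum_congr rfl this, Finset.sum_const, C_eq_coe_nat, ← nsmul_eq_mul]
  rw [hform]
  exact L_pow_mem _ k hk 0

lemma monomial_mem (α : Fin n →₀ ℕ) (hα : (α.sum fun _ e => e) ≤ 2 * d) (c : ℝ) :
    (monomial α c : MvPolynomial (Fin n) ℝ) ∈ D n d := by
  classical
  have hc : (monomial α c : MvPolynomial (Fin n) ℝ) = c • monomial α 1 := by
    rw [smul_monomial, smul_eq_mul, mul_one]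
  rw [hc]
  refine smul_mem_D _ ?_
  set s := Finsupp.toMultiset α with hs
  have hprod : (s.map X).prod = (monomial α 1 : MvPolynomial (Fin n) ℝ) := by
    rw [hs, Finsupp.toMultiset_map, Finsupp.prod_toMultiset]
    rw [monic_monomial_eq]
    exact Finsupp.prod_mapDomain_index (fun p => pow_zero p) (fun p e1 e2 => pow_add p e1 e2)
  set l := s.toList with hl
  have hcard : l.length ≤ 2 * d := by
    rw [hl, Multiset.length_toList, hs]
    rw [Finsupp.card_toMultiset]; exact hα
  have hfin : (∏ t : Fin l.length, (X (l.get t) : MvPolynomial (Fin n) ℝ))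
      = monomial α 1 := by
    rw [← hprod]
    calc ∏ t : Fin l.length, (X (l.get t) : MvPolynomial (Fin n) ℝ)
        = (List.ofFn fun t => (X (l.get t) : MvPolynomial (Fin n) ℝ)).prod :=
          List.prod_ofFn.symm
      _ = (l.map X).prod := by rw [List.ofFn_comp' l.get X, List.ofFn_get]
      _ = (s.map X).prod := by
          conv_rhs => rw [← Multiset.coe_toList s, Multiset.map_coe]
          rw [Multiset.prod_coe]
  rw [← hfin]
  exact prod_X_mem _ hcard _

end SosDcd

theorem sos_convex_dcd_exists
    {n d : ℕ} (f : MvPolynomial (Fin n) ℝ) (hdeg : f.totalDegree ≤ 2 * d) :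
    ∃ g h : MvPolynomial (Fin n) ℝ,
      g.totalDegree ≤ 2 * d ∧ h.totalDegree ≤ 2 * d ∧
      SosConvex g ∧ SosConvex h ∧ f = g - h := by
  classical
  have hf : f ∈ SosDcd.D n d := by
    rw [← MvPolynomial.support_sum_monomial_coeff f]
    refine SosDcd.sum_mem_D _ _ fun α hα => ?_
    exact SosDcd.monomial_mem α ((MvPolynomial.le_totalDegree hα).trans hdeg) _
  obtain ⟨g, h, dg, dh, sg, sh, rfl⟩ := hf
  exact ⟨g, h, dg, dh, sg, sh, rfl⟩
end
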